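/- The order-3 braided antisymmetriser A⁽³⁾ := (id − σ₂) ∘ (id − σ₁ + σ₁∘σ₂) on V⊗V⊗V has rank 1, and its range is spanned by A⁽³⁾(ω₋⊗ω₊⊗ω_z). -/

import Mathlib

open TensorProduct

noncomputable section

/-- The 3-dimensional complex vector space with basis `ω 0 = ω₋`, `ω 1 = ω₊`, `ω 2 = ω_z`. -/
abbrev V : Type := Fin 3 → ℂ

/-- The distinguished basis `(ω₋, ω₊, ω_z)` of `V`. -/
def ω : Fin 3 → V := fun i => Pi.basisFun ℂ (Fin 3) i

/-- The basis `ω_a ⊗ ω_b` of `V ⊗ V`. -/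
def basisVV : Module.Basis (Fin 3 × Fin 3) ℂ (V ⊗[ℂ] V) :=
  (Pi.basisFun ℂ (Fin 3)).tensorProduct (Pi.basisFun ℂ (Fin 3))

/-- The values of the braiding `σ` on the basis vectors `ω_a ⊗ ω_b`
(first index `0 = −`, `1 = +`, `2 = z`). -/
def σval (q : ℝ) : Fin 3 → Fin 3 → V ⊗[ℂ] V :=
  ![![ω 0 ⊗ₜ[ℂ] ω 0,
     (1 - (q : ℂ) ^ 2) • (ω 0 ⊗ₜ[ℂ] ω 1) + ((q : ℂ) ^ 2)⁻¹ • (ω 1 ⊗ₜ[ℂ] ω 0),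
     (1 - (q : ℂ) ^ 2) • (ω 0 ⊗ₜ[ℂ] ω 2) + ((q : ℂ) ^ 4)⁻¹ • (ω 2 ⊗ₜ[ℂ] ω 0)],
    ![(q : ℂ) ^ 4 • (ω 0 ⊗ₜ[ℂ] ω 1),
      ω 1 ⊗ₜ[ℂ] ω 1,
      (q : ℂ) ^ 6 • (ω 2 ⊗ₜ[ℂ] ω 1)],
    ![(q : ℂ) ^ 6 • (ω 0 ⊗ₜ[ℂ] ω 2),
      (1 - (q : ℂ) ^ 2) • (ω 2 ⊗ₜ[ℂ] ω 1) + ((q : ℂ) ^ 4)⁻¹ • (ω 1 ⊗ₜ[ℂ] ω 2),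
      ω 2 ⊗ₜ[ℂ] ω 2]]

/-- The braiding `σ` of Woronowicz's 3d left covariant calculus on `SU_q(2)`. -/
def σmap (q : ℝ) : (V ⊗[ℂ] V) →ₗ[ℂ] (V ⊗[ℂ] V) :=
  basisVV.constr ℂ (fun p => σval q p.1 p.2)

/-- `V ⊗ V ⊗ V`. -/
abbrev V3 : Type := V ⊗[ℂ] (V ⊗[ℂ] V)

instance : AddCommGroup V3 := inferInstance
instance : Module ℂ V3 := inferInstance

/-- `σ₁ = σ ⊗ id` acting on the first two tensor slots of `V ⊗ V ⊗ V`. -/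
def σ₁ (q : ℝ) : V3 →ₗ[ℂ] V3 :=
  (TensorProduct.assoc ℂ V V V).toLinearMap ∘ₗ
    (TensorProduct.map (σmap q) LinearMap.id) ∘ₗ
      (TensorProduct.assoc ℂ V V V).symm.toLinearMap

/-- `σ₂ = id ⊗ σ` acting on the last two tensor slots of `V ⊗ V ⊗ V`. -/
def σ₂ (q : ℝ) : V3 →ₗ[ℂ] V3 :=
  TensorProduct.map LinearMap.id (σmap q)

/-- The order-3 braided antisymmetriser `A⁽³⁾ = (id − σ₂) ∘ (id − σ₁ + σ₁∘σ₂)`. -/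
def A3 (q : ℝ) : V3 →ₗ[ℂ] V3 :=
  ((LinearMap.id : V3 →ₗ[ℂ] V3) - σ₂ q) ∘ₗ
    ((LinearMap.id : V3 →ₗ[ℂ] V3) - σ₁ q + σ₁ q ∘ₗ σ₂ q)


lemma σ_apply (q : ℝ) (a b : Fin 3) : σmap q (ω a ⊗ₜ[ℂ] ω b) = σval q a b := by
  have h : ω a ⊗ₜ[ℂ] ω b = basisVV (a, b) := by
    rw [basisVV, Module.Basis.tensorProduct_apply]; rfl
  rw [h, σmap, Module.Basis.constr_basis]

/-- The (suitably normalised) braided antisymmetrised volume element. -/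
def w (q : ℝ) : V3 :=
  (q:ℂ)^4 • (ω 0 ⊗ₜ[ℂ] (ω 1 ⊗ₜ[ℂ] ω 2)) - (q:ℂ)^10 • (ω 0 ⊗ₜ[ℂ] (ω 2 ⊗ₜ[ℂ] ω 1))
  - (ω 1 ⊗ₜ[ℂ] (ω 0 ⊗ₜ[ℂ] ω 2)) + ((q:ℂ)^6)⁻¹ • (ω 1 ⊗ₜ[ℂ] (ω 2 ⊗ₜ[ℂ] ω 0))
  + (q:ℂ)^4 • (ω 2 ⊗ₜ[ℂ] (ω 0 ⊗ₜ[ℂ] ω 1)) - (ω 2 ⊗ₜ[ℂ] (ω 1 ⊗ₜ[ℂ] ω 0))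

/-- Coefficients such that `A3 (ω_a ⊗ ω_b ⊗ ω_c) = coef a b c • w`. -/
def coef (q : ℝ) : Fin 3 → Fin 3 → Fin 3 → ℂ :=
  ![![![0, 0, 0], ![0, 0, 1], ![0, -((q:ℂ)^4)⁻¹, 0]],
    ![![0, 0, -(q:ℂ)^2], ![0, 0, 0], ![(q:ℂ)^6, 0, 0]],
    ![![0, 1, 0], ![-(q:ℂ)^2, 0, 0], ![0, 0, 0]]]

@[simp] lemma fin_mk_two (h : 2 < 3) : (⟨2, h⟩ : Fin 3) = 2 := rfl

set_option maxRecDepth 8000 in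
set_option maxHeartbeats 2000000 in
lemma A3_basis (q : ℝ) (hq : (q:ℂ) ≠ 0) (a b c : Fin 3) :
    A3 q (ω a ⊗ₜ[ℂ] (ω b ⊗ₜ[ℂ] ω c)) = coef q a b c • w q := by
  fin_cases a <;> fin_cases b <;> fin_cases c <;>
  · simp only [A3, σ₁, σ₂, w, coef, LinearMap.comp_apply, LinearMap.sub_apply,
      LinearMap.add_apply, LinearMap.id_apply, map_sub, map_add, map_smul,
      TensorProduct.map_tmul, σ_apply, σval, Matrix.cons_val', Matrix.cons_val_zero,
      Matrix.cons_val_one, Matrix.head_cons, Matrix.cons_val_two, Matrix.tail_cons,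
      Matrix.head_fin_const, Matrix.cons_val_fin_one, tmul_add, tmul_smul, add_tmul,
      ← smul_tmul', sub_tmul, TensorProduct.assoc_tmul, TensorProduct.assoc_symm_tmul,
      LinearEquiv.coe_coe, LinearMap.id_coe, id_eq, Fin.isValue, Fin.mk_zero, Fin.mk_one,
      fin_mk_two, zero_smul, one_smul, neg_smul, sub_zero, zero_sub, add_zero, zero_add,
      smul_add, smul_sub, smul_smul]
    match_scalars <;> field_simp <;> ring

/-- The basis `ω_a ⊗ ω_b ⊗ ω_c` of `V ⊗ V ⊗ V`. -/
def b3 : Module.Basis (Fin 3 × (Fin 3 × Fin 3)) ℂ V3 :=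
  (Pi.basisFun ℂ (Fin 3)).tensorProduct basisVV

lemma b3_apply (a b c : Fin 3) : b3 (a, (b, c)) = ω a ⊗ₜ[ℂ] (ω b ⊗ₜ[ℂ] ω c) := by
  rw [b3, Module.Basis.tensorProduct_apply, basisVV, Module.Basis.tensorProduct_apply]; rfl

set_option synthInstance.maxHeartbeats 1000000 in
set_option maxHeartbeats 1000000 in
lemma w_ne (q : ℝ) (hq : (q:ℂ) ≠ 0) : w q ≠ 0 := by
  intro h
  have h2 := congrArg (fun x => b3.repr x (0, (1, 2))) h
  simp only [w, b3, map_sub, map_add, map_smul, map_zero, Finsupp.coe_zero, Pi.zero_apply,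
    Finsupp.coe_sub, Finsupp.coe_add, Finsupp.coe_smul, Pi.sub_apply, Pi.add_apply,
    Pi.smul_apply, Module.Basis.tensorProduct_repr_tmul_apply, basisVV, Pi.basisFun_repr,
    ω, Pi.basisFun_apply, Pi.single_apply, smul_eq_mul] at h2
  simp at h2
  exact hq (by exact_mod_cast h2)


/-- `A⁽³⁾` has rank 1 and its range is spanned by `A⁽³⁾(ω₋⊗ω₊⊗ω_z)`. -/
theorem A3_rank_one (q : ℝ) (hq0 : 0 < q) (hq1 : q < 1) :
    Module.finrank ℂ (LinearMap.range (A3 q)) = 1 ∧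
      LinearMap.range (A3 q) =
        Submodule.span ℂ {A3 q (ω 0 ⊗ₜ[ℂ] (ω 1 ⊗ₜ[ℂ] ω 2))} := by
  have hq : (q:ℂ) ≠ 0 := Complex.ofReal_ne_zero.mpr hq0.ne'
  have hv : A3 q (ω 0 ⊗ₜ[ℂ] (ω 1 ⊗ₜ[ℂ] ω 2)) = w q := by
    have h := A3_basis q hq 0 1 2
    rwa [show coef q 0 1 2 = 1 from rfl, one_smul] at h
  have hrange : LinearMap.range (A3 q) = Submodule.span ℂ {w q} := by
    apply le_antisymm
    · rw [LinearMap.range_eq_map, ← b3.span_eq, Submodule.map_span, Submodule.span_le]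
      rintro x ⟨y, ⟨⟨a, b, c⟩, rfl⟩, rfl⟩
      rw [SetLike.mem_coe, b3_apply, A3_basis q hq]
      exact Submodule.smul_mem _ _ (Submodule.mem_span_singleton_self _)
    · rw [Submodule.span_le, Set.singleton_subset_iff]
      exact ⟨ω 0 ⊗ₜ[ℂ] (ω 1 ⊗ₜ[ℂ] ω 2), hv⟩
  exact ⟨by rw [hrange]; exact finrank_span_singleton (w_ne q hq), by rw [hrange, hv]⟩

end
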